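/- Let X and Y be independent, identically distributed random variables taking values in [1, C] for some constant C ≥ 1, and suppose E[X²]·E[1/X] > E[X]. Then E[X] · E[(X−Y)²/(X·Y·(X+Y))] ≥ 2·(E[X]·E[1/X] − 1)² / ( E[X²]·E[1/X]/E[X] − 1 ). -/

import Mathlib

open MeasureTheory ProbabilityTheory

set_option maxHeartbeats 1000000 in
theorem stmt11 {Ω : Type} [MeasurableSpace Ω] (P : Measure Ω) [IsProbabilityMeasure P]
    (C : ℝ) (hC : 1 ≤ C) (X Y : Ω → ℝ)
    (hmX : Measurable X) (hmY : Measurable Y)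
    (hindep : IndepFun X Y P)
    (hid : Measure.map X P = Measure.map Y P)
    (hXbd : ∀ᵐ ω ∂P, X ω ∈ Set.Icc 1 C) (hYbd : ∀ᵐ ω ∂P, Y ω ∈ Set.Icc 1 C)
    (hnondeg : (∫ ω, (X ω) ^ 2 ∂P) * (∫ ω, (X ω)⁻¹ ∂P) > ∫ ω, X ω ∂P) :
    (∫ ω, X ω ∂P) * ∫ ω, (X ω - Y ω) ^ 2 / (X ω * Y ω * (X ω + Y ω)) ∂P ≥
      2 * ((∫ ω, X ω ∂P) * (∫ ω, (X ω)⁻¹ ∂P) - 1) ^ 2 /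
        ((∫ ω, (X ω) ^ 2 ∂P) * (∫ ω, (X ω)⁻¹ ∂P) / (∫ ω, X ω ∂P) - 1) := by
  set a := ∫ ω, X ω ∂P with ha
  set b := ∫ ω, (X ω)⁻¹ ∂P with hb
  set c := ∫ ω, (X ω) ^ 2 ∂P with hc
  have hCC : C ≤ 2*C^3 := by
    nlinarith [mul_nonneg (sub_nonneg.2 hC) (sq_nonneg C),
      mul_nonneg (sub_nonneg.2 hC) (le_trans zero_le_one hC), sq_nonneg C,
      pow_nonneg (le_trans zero_le_one hC) 3]
  -- integrability helper
  have hint : ∀ (f : Ω → ℝ), AEStronglyMeasurable f P →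
      (∀ᵐ ω ∂P, |f ω| ≤ 2 * C ^ 3) → Integrable f P := by
    intro f hf hbd
    refine (integrable_const (2 * C ^ 3)).mono' hf ?_
    filter_upwards [hbd] with ω h
    simpa [Real.norm_eq_abs] using h
  -- a.e. bounds
  have hXY : ∀ᵐ ω ∂P, (1 ≤ X ω ∧ X ω ≤ C) ∧ (1 ≤ Y ω ∧ Y ω ≤ C) := by
    filter_upwards [hXbd, hYbd] with ω h1 h2
    exact ⟨⟨h1.1, h1.2⟩, ⟨h2.1, h2.2⟩⟩
  -- pointwise bounds
  have haux : ∀ x y : ℝ, 1 ≤ x → x ≤ C → 1 ≤ y → y ≤ C →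
      |x * y⁻¹| ≤ 2*C^3 ∧ |x⁻¹ * y| ≤ 2*C^3 ∧ |x^2 * y⁻¹| ≤ 2*C^3 ∧
      |x⁻¹ * y^2| ≤ 2*C^3 ∧ |(x-y)^2/(x*y)| ≤ 2*C^3 ∧
      |(x-y)^2*(x+y)/(x*y)| ≤ 2*C^3 ∧ |(x-y)^2/(x*y*(x+y))| ≤ 2*C^3 := by
    intro x y hx1 hxC hy1 hyC
    have hx0 : (0:ℝ) < x := lt_of_lt_of_le one_pos hx1
    have hy0 : (0:ℝ) < y := lt_of_lt_of_le one_pos hy1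
    have hxi : x⁻¹ ≤ 1 := inv_le_one_of_one_le₀ hx1
    have hyi : y⁻¹ ≤ 1 := inv_le_one_of_one_le₀ hy1
    have hxi0 : (0:ℝ) < x⁻¹ := inv_pos.2 hx0
    have hyi0 : (0:ℝ) < y⁻¹ := inv_pos.2 hy0
    have hC2 : 1 ≤ C^2 := by nlinarith
    have hC3 : C ≤ C^3 := by nlinarith [mul_le_mul_of_nonneg_left hC2 (by linarith : (0:ℝ) ≤ C)]
    have hC23 : C^2 ≤ C^3 := by nlinarith [mul_le_mul_of_nonneg_left hC (by positivity : (0:ℝ) ≤ C^2)]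
    have h5 : (x-y)^2 ≤ (C-1)^2 := sq_le_sq' (by linarith) (by linarith)
    have hCm : (C-1)^2 ≤ C^2 := by nlinarith
    have hxy1 : 1 ≤ x*y := by nlinarith [mul_le_mul_of_nonneg_left hy1 hx0.le]
    have hs1 : 1 ≤ x*y*(x+y) := by
      nlinarith [mul_le_mul hxy1 (by linarith : (1:ℝ) ≤ x+y) zero_le_one (by positivity)]
    have hxsq : x^2 ≤ C^2 := sq_le_sq' (by linarith) hxC
    have hysq : y^2 ≤ C^2 := sq_le_sq' (by linarith) hyC
    have hC30 : (0:ℝ) ≤ C^3 := by positivity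
    refine ⟨?_, ?_, ?_, ?_, ?_, ?_, ?_⟩ <;> rw [abs_of_nonneg (by positivity)]
    · have t := mul_le_of_le_one_right hx0.le hyi
      linarith
    · have t := mul_le_of_le_one_left hy0.le hxi
      linarith
    · have t := mul_le_of_le_one_right (sq_nonneg x) hyi
      linarith
    · have t := mul_le_of_le_one_left (sq_nonneg y) hxi
      linarith
    · rw [div_le_iff₀ (by positivity)]
      have t1 : (x-y)^2 ≤ C^2 := le_trans h5 hCm
      have t4 : 2*C^3 ≤ 2*C^3*(x*y) := le_mul_of_one_le_right (by positivity) hxy1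
      linarith
    · rw [div_le_iff₀ (by positivity)]
      have t1 : (x-y)^2*(x+y) ≤ C^2*(x+y) :=
        mul_le_mul_of_nonneg_right (le_trans h5 hCm) (by linarith)
      have t2 : C^2*(x+y) ≤ C^2*(2*C) := mul_le_mul_of_nonneg_left (by linarith) (sq_nonneg C)
      have t3 : C^2*(2*C) = 2*C^3 := by ring
      have t4 : 2*C^3 ≤ 2*C^3*(x*y) := le_mul_of_one_le_right (by positivity) hxy1
      linarith
    · rw [div_le_iff₀ (by positivity)]
      have t1 : (x-y)^2 ≤ C^2 := le_trans h5 hCm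
      have t4 : 2*C^3 ≤ 2*C^3*(x*y*(x+y)) := le_mul_of_one_le_right (by positivity) hs1
      linarith
  -- transfer integrals from Y to X
  have hmap : ∀ (φ : ℝ → ℝ), Measurable φ →
      ∫ ω, φ (Y ω) ∂P = ∫ ω, φ (X ω) ∂P := by
    intro φ hφ
    rw [← integral_map hmY.aemeasurable hφ.aestronglyMeasurable, ← hid,
      integral_map hmX.aemeasurable hφ.aestronglyMeasurable]
  -- independence product formula
  have key : ∀ (φ ψ : ℝ → ℝ), Measurable φ → Measurable ψ →
      ∫ ω, φ (X ω) * ψ (Y ω) ∂P = (∫ ω, φ (X ω) ∂P) * ∫ ω, ψ (X ω) ∂P := by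
    intro φ ψ hφ hψ
    have h := (hindep.comp hφ hψ).integral_fun_mul_eq_mul_integral
      (hφ.comp hmX).aestronglyMeasurable (hψ.comp hmY).aestronglyMeasurable
    simpa only [Function.comp_def, hmap ψ hψ] using h
  -- product integrals
  have k1 : ∫ ω, X ω * (Y ω)⁻¹ ∂P = a * b := by
    simpa using key (fun x => x) (fun x => x⁻¹) measurable_id measurable_inv
  have k2 : ∫ ω, (X ω)⁻¹ * Y ω ∂P = b * a := by
    simpa using key (fun x => x⁻¹) (fun x => x) measurable_inv measurable_id
  have k3 : ∫ ω, (X ω)^2 * (Y ω)⁻¹ ∂P = c * b := by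
    simpa using key (fun x => x^2) (fun x => x⁻¹) (measurable_id.pow_const 2) measurable_inv
  have k4 : ∫ ω, (X ω)⁻¹ * (Y ω)^2 ∂P = b * c := by
    simpa using key (fun x => x⁻¹) (fun x => x^2) measurable_inv (measurable_id.pow_const 2)
  have kY : ∫ ω, Y ω ∂P = a := by
    simpa using hmap (fun x => x) measurable_id
  -- integrabilities
  have i1 : Integrable (fun ω => X ω * (Y ω)⁻¹) P := by
    refine hint _ (Measurable.aestronglyMeasurable (by fun_prop)) ?_
    filter_upwards [hXY] with ω h
    exact (haux _ _ h.1.1 h.1.2 h.2.1 h.2.2).1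
  have i2 : Integrable (fun ω => (X ω)⁻¹ * Y ω) P := by
    refine hint _ (Measurable.aestronglyMeasurable (by fun_prop)) ?_
    filter_upwards [hXY] with ω h
    exact (haux _ _ h.1.1 h.1.2 h.2.1 h.2.2).2.1
  have i3 : Integrable (fun ω => (X ω)^2 * (Y ω)⁻¹) P := by
    refine hint _ (Measurable.aestronglyMeasurable (by fun_prop)) ?_
    filter_upwards [hXY] with ω h
    exact (haux _ _ h.1.1 h.1.2 h.2.1 h.2.2).2.2.1
  have i4 : Integrable (fun ω => (X ω)⁻¹ * (Y ω)^2) P := by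
    refine hint _ (Measurable.aestronglyMeasurable (by fun_prop)) ?_
    filter_upwards [hXY] with ω h
    exact (haux _ _ h.1.1 h.1.2 h.2.1 h.2.2).2.2.2.1
  have iX : Integrable X P := by
    refine hint _ hmX.aestronglyMeasurable ?_
    filter_upwards [hXY] with ω h
    rw [abs_of_nonneg (by linarith [h.1.1])]
    linarith [h.1.2, hCC]
  have iY : Integrable Y P := by
    refine hint _ hmY.aestronglyMeasurable ?_
    filter_upwards [hXY] with ω h
    rw [abs_of_nonneg (by linarith [h.2.1])]
    linarith [h.2.2, hCC]
  have if1 : Integrable (fun ω => (X ω - Y ω)^2 / (X ω * Y ω * (X ω + Y ω))) P := by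
    refine hint _ (Measurable.aestronglyMeasurable (by fun_prop)) ?_
    filter_upwards [hXY] with ω h
    exact (haux _ _ h.1.1 h.1.2 h.2.1 h.2.2).2.2.2.2.2.2
  have if2 : Integrable (fun ω => (X ω - Y ω)^2 / (X ω * Y ω)) P := by
    refine hint _ (Measurable.aestronglyMeasurable (by fun_prop)) ?_
    filter_upwards [hXY] with ω h
    exact (haux _ _ h.1.1 h.1.2 h.2.1 h.2.2).2.2.2.2.1
  have if3 : Integrable (fun ω => (X ω - Y ω)^2 * (X ω + Y ω) / (X ω * Y ω)) P := by
    refine hint _ (Measurable.aestronglyMeasurable (by fun_prop)) ?_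
    filter_upwards [hXY] with ω h
    exact (haux _ _ h.1.1 h.1.2 h.2.1 h.2.2).2.2.2.2.2.1
  -- compute A = ∫ f2
  have hA : ∫ ω, (X ω - Y ω)^2 / (X ω * Y ω) ∂P = 2*(a*b) - 2 := by
    have e : ∀ᵐ ω ∂P, (X ω - Y ω)^2 / (X ω * Y ω)
        = X ω * (Y ω)⁻¹ + (X ω)⁻¹ * Y ω - 2 := by
      filter_upwards [hXY] with ω h
      have hx0 : X ω ≠ 0 := ne_of_gt (by linarith [h.1.1] : (0:ℝ) < X ω)
      have hy0 : Y ω ≠ 0 := ne_of_gt (by linarith [h.2.1] : (0:ℝ) < Y ω)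
      field_simp
      ring
    have i12 : Integrable (fun ω => X ω * (Y ω)⁻¹ + (X ω)⁻¹ * Y ω) P := i1.add i2
    rw [integral_congr_ae e, integral_sub i12 (integrable_const 2),
      integral_add i1 i2, k1, k2]
    simp only [integral_const, measure_univ, probReal_univ, ENNReal.toReal_one, smul_eq_mul, one_mul]
    ring
  -- compute B = ∫ f3
  have hB : ∫ ω, (X ω - Y ω)^2 * (X ω + Y ω) / (X ω * Y ω) ∂P = 2*(c*b) - 2*a := by
    have e : ∀ᵐ ω ∂P, (X ω - Y ω)^2 * (X ω + Y ω) / (X ω * Y ω)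
        = (X ω)^2 * (Y ω)⁻¹ + (X ω)⁻¹ * (Y ω)^2 - X ω - Y ω := by
      filter_upwards [hXY] with ω h
      have hx0 : X ω ≠ 0 := ne_of_gt (by linarith [h.1.1] : (0:ℝ) < X ω)
      have hy0 : Y ω ≠ 0 := ne_of_gt (by linarith [h.2.1] : (0:ℝ) < Y ω)
      field_simp
      ring
    have i34 : Integrable (fun ω => (X ω)^2 * (Y ω)⁻¹ + (X ω)⁻¹ * (Y ω)^2) P := i3.add i4
    have i34X : Integrable (fun ω => (X ω)^2 * (Y ω)⁻¹ + (X ω)⁻¹ * (Y ω)^2 - X ω) P :=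
      i34.sub iX
    rw [integral_congr_ae e, integral_sub i34X iY,
      integral_sub i34 iX, integral_add i3 i4, k3, k4, kY]
    ring
  have hBpos : 0 < 2*(c*b) - 2*a := by linarith [hnondeg]
  set A : ℝ := 2*(a*b) - 2 with hAdef
  set B : ℝ := 2*(c*b) - 2*a with hBdef
  set t : ℝ := A / B with htdef
  -- pointwise Cauchy-Schwarz
  have hpt : ∀ᵐ ω ∂P, 0 ≤ (X ω - Y ω)^2 / (X ω * Y ω * (X ω + Y ω))
      - 2*t * ((X ω - Y ω)^2 / (X ω * Y ω))
      + t^2 * ((X ω - Y ω)^2 * (X ω + Y ω) / (X ω * Y ω)) := by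
    filter_upwards [hXY] with ω h
    have hx0 : (0:ℝ) < X ω := by linarith [h.1.1]
    have hy0 : (0:ℝ) < Y ω := by linarith [h.2.1]
    have hs0 : (0:ℝ) < X ω + Y ω := by linarith
    have hid2 : (X ω - Y ω)^2 / (X ω * Y ω * (X ω + Y ω))
        - 2*t * ((X ω - Y ω)^2 / (X ω * Y ω))
        + t^2 * ((X ω - Y ω)^2 * (X ω + Y ω) / (X ω * Y ω))
        = (X ω - Y ω)^2 / (X ω * Y ω * (X ω + Y ω)) * (1 - t * (X ω + Y ω))^2 := by
      field_simp
      ring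
    rw [hid2]
    positivity
  have h0 : 0 ≤ (∫ ω, (X ω - Y ω)^2 / (X ω * Y ω * (X ω + Y ω)) ∂P) - 2*t*A + t^2*B := by
    have hi := integral_nonneg_of_ae hpt
    have j2 : Integrable (fun ω => 2*t * ((X ω - Y ω)^2 / (X ω * Y ω))) P :=
      if2.const_mul (2*t)
    have j3 : Integrable (fun ω => t^2 * ((X ω - Y ω)^2 * (X ω + Y ω) / (X ω * Y ω))) P :=
      if3.const_mul (t^2)
    have j12 : Integrable (fun ω => (X ω - Y ω)^2 / (X ω * Y ω * (X ω + Y ω))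
        - 2*t * ((X ω - Y ω)^2 / (X ω * Y ω))) P := if1.sub j2
    rw [integral_add j12 j3, integral_sub if1 j2, integral_const_mul, integral_const_mul,
      hA, hB] at hi
    linarith [hi]
  -- main inequality: ∫ f1 ≥ A²/B
  have hmain : A^2 / B ≤ ∫ ω, (X ω - Y ω)^2 / (X ω * Y ω * (X ω + Y ω)) ∂P := by
    have ht : 2*t*A - t^2*B = A^2 / B := by
      rw [htdef]
      field_simp
      ring
    linarith [h0, ht]
  have ha1 : 1 ≤ a := by
    have := integral_mono_ae (integrable_const 1) iX (hXY.mono fun ω h => h.1.1)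
    simpa using this
  have hden : 0 < c*b/a - 1 := by
    rw [lt_sub_iff_add_lt, zero_add, lt_div_iff₀ (by linarith)]
    linarith [hnondeg]
  have heq : a * (A^2 / B) = 2*(a*b - 1)^2 / (c*b/a - 1) := by
    have ha0 : a ≠ 0 := ne_of_gt (lt_of_lt_of_le one_pos ha1)
    rw [hAdef, hBdef, mul_div_assoc']
    rw [div_eq_div_iff hBpos.ne' hden.ne']
    field_simp
    ring
  calc 2*(a*b - 1)^2 / (c*b/a - 1) = a * (A^2 / B) := heq.symm
    _ ≤ a * ∫ ω, (X ω - Y ω)^2 / (X ω * Y ω * (X ω + Y ω)) ∂P :=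
        mul_le_mul_of_nonneg_left hmain (by linarith)
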